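/- Let m ≥ 2 be an integer, λ ∈ ℂ \ {0}, and define p_{λ,k} by p_{λ,0} = 1 and p_{λ,k+1}(x) = λ x^{m-1} p_{λ,k}(x) + p_{λ,k}'(x). Then for each k ≥ 1 there exist positive integers C_{k,n}, 0 ≤ n ≤ ⌊k(m-1)/m⌋, with C_{k,0} = 1, such that p_{λ,k}(x) = Σ_{n=0}^{⌊k(m-1)/m⌋} λ^{k-n} x^{(m-1)k - nm} C_{k,n}. -/

import Mathlib

open Polynomial Finset

lemma aux_arith (m k : ℕ) (hm : 2 ≤ m) :
    k*(m-1)/m ≤ k ∧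
    k*(m-1)/m ≤ (k+1)*(m-1)/m ∧
    (k+1)*(m-1)/m ≤ k*(m-1)/m + 1 ∧
    (k*(m-1)/m)*m + (k*(m-1))%m = k*(m-1) ∧
    ((k+1)*(m-1)/m = k*(m-1)/m + 1 ↔ 1 ≤ (k*(m-1))%m) := by
  have hm0 : 0 < m := by omega
  have hqr : (k*(m-1))%m + (k*(m-1)/m) * m = k*(m-1) := Nat.mod_add_div' _ m
  have hr : (k*(m-1))%m < m := Nat.mod_lt _ hm0
  have e3 : (k+1)*(m-1) = k*(m-1)+(m-1) := by ring
  have hsucc : (k+1)*(m-1) = m*(k*(m-1)/m) + ((k*(m-1))%m + (m-1)) := by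
    rw [mul_comm m]; omega
  have hdiv : (k+1)*(m-1)/m = k*(m-1)/m + ((k*(m-1))%m + (m-1))/m := by
    rw [hsucc, Nat.mul_add_div hm0]
  have hle : k*(m-1)/m ≤ k := by
    have h1 : (k*(m-1)/m) * m ≤ k*(m-1) := Nat.div_mul_le_self _ _
    have h2 : k*(m-1) ≤ k*m := Nat.mul_le_mul_left _ (by omega)
    exact Nat.le_of_mul_le_mul_right (le_trans h1 h2) hm0
  have hlt2 : ((k*(m-1))%m + (m-1))/m < 2 := (Nat.div_lt_iff_lt_mul hm0).2 (by omega)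
  refine ⟨hle, by rw [hdiv]; exact Nat.le_add_right _ _,
    by rw [hdiv]; exact Nat.add_le_add_left (Nat.lt_succ_iff.mp hlt2) _, by omega, ?_⟩
  rw [hdiv]
  by_cases hr0 : (k*(m-1))%m = 0
  · rw [Nat.div_eq_of_lt (show (k*(m-1))%m + (m-1) < m by omega)]
    omega
  · have hA : 1*m ≤ (k*(m-1))%m + (m-1) := by omega
    have hB : (k*(m-1))%m + (m-1) < (1+1)*m := by omega
    rw [Nat.div_eq_of_lt_le hA hB]
    omega

theorem derivative_polynomial_expansion (m : ℕ) (hm : 2 ≤ m) (lam : ℂ) (hlam : lam ≠ 0)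
    (p : ℕ → Polynomial ℂ) (hp0 : p 0 = 1)
    (hprec : ∀ k, p (k + 1) =
      Polynomial.C lam * Polynomial.X ^ (m - 1) * p k + Polynomial.derivative (p k)) :
    ∀ k : ℕ, 1 ≤ k → ∃ C : ℕ → ℕ, C 0 = 1 ∧
      (∀ n, n ≤ k * (m - 1) / m → 0 < C n) ∧
      p k = ∑ n ∈ Finset.range (k * (m - 1) / m + 1),
        Polynomial.C (lam ^ (k - n) * (C n : ℂ)) * Polynomial.X ^ ((m - 1) * k - n * m) := by
  intro k hk
  induction k, hk using Nat.le_induction with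
  | base =>
    refine ⟨fun _ => 1, rfl, fun n _ => one_pos, ?_⟩
    have h1 : 1 * (m-1) / m = 0 := Nat.div_eq_of_lt (by omega)
    rw [hprec 0, hp0, h1]
    simp
  | succ k hk ih =>
    obtain ⟨C, hC0, hCpos, hCsum⟩ := ih
    obtain ⟨hqk, hmono, hstep, hdm, hiff⟩ := aux_arith m k hm
    set q := k*(m-1)/m with hq
    set q1 := (k+1)*(m-1)/m with hq1
    have hm0 : 0 < m := by omega
    have hAq : q * m ≤ (m-1) * k := by rw [mul_comm (m-1) k]; omega
    refine ⟨fun n => (if n ≤ q then C n else 0) +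
        (if n = 0 then 0 else ((m-1)*k - (n-1)*m) * C (n-1)), by simp [hC0], ?_, ?_⟩
    · intro n hn
      by_cases h : n ≤ q
      · have h2 : 0 < C n := hCpos n h
        simp only [if_pos h]
        exact Nat.lt_of_lt_of_le h2 (Nat.le_add_right _ _)
      · have hn' : n = q + 1 := by omega
        have hr : 1 ≤ (k*(m-1))%m := hiff.1 (by omega)
        have hpos : 0 < (m-1)*k - q*m := by rw [mul_comm (m-1) k]; omega
        subst hn'
        simp only [if_neg h, Nat.add_sub_cancel, if_neg (Nat.succ_ne_zero q), zero_add]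
        exact Nat.mul_pos hpos (hCpos q le_rfl)
    · -- the main polynomial identity
      rw [hprec k, hCsum]
      have hext : (∑ n ∈ Finset.range (q1 + 1),
            Polynomial.C (lam ^ (k + 1 - n) * ((((if n ≤ q then C n else 0) +
              (if n = 0 then 0 else ((m-1)*k - (n-1)*m) * C (n-1))) : ℕ) : ℂ)) *
              Polynomial.X ^ ((m - 1) * (k+1) - n * m))
          = ∑ n ∈ Finset.range (q + 2),
            Polynomial.C (lam ^ (k + 1 - n) * ((((if n ≤ q then C n else 0) +
              (if n = 0 then 0 else ((m-1)*k - (n-1)*m) * C (n-1))) : ℕ) : ℂ)) *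
              Polynomial.X ^ ((m - 1) * (k+1) - n * m) := by
        apply Finset.sum_subset
        · intro x hx
          simp only [Finset.mem_range] at *
          omega
        · intro x hx hnx
          simp only [Finset.mem_range] at hx hnx
          have hx1 : x = q + 1 := by omega
          have hq1q : q1 = q := by omega
          have hr0 : (k*(m-1))%m = 0 := by
            by_contra hc
            have := hiff.2 (by omega)
            omega
          have hz : (m-1)*k - q*m = 0 := by rw [mul_comm (m-1) k]; omega
          subst hx1
          simp [hz]
      rw [hext]
      have hsplit : ∀ n ∈ Finset.range (q + 2),
          Polynomial.C (lam ^ (k + 1 - n) * ((((if n ≤ q then C n else 0) +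
            (if n = 0 then 0 else ((m-1)*k - (n-1)*m) * C (n-1))) : ℕ) : ℂ)) *
            Polynomial.X ^ ((m - 1) * (k+1) - n * m)
          = (if n ≤ q then Polynomial.C (lam ^ (k + 1 - n) * (C n : ℂ)) *
              Polynomial.X ^ ((m - 1) * (k+1) - n * m) else 0) +
            (if n = 0 then 0 else Polynomial.C (lam ^ (k + 1 - n) *
              ((((m-1)*k - (n-1)*m) * C (n-1) : ℕ) : ℂ)) *
              Polynomial.X ^ ((m - 1) * (k+1) - n * m)) := by
        intro n _
        by_cases h0 : n = 0
        · subst h0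
          simp
        · by_cases h1 : n ≤ q <;>
            simp only [if_pos, if_neg, h0, h1, if_true, if_false, ite_true, ite_false] <;>
            push_cast <;> ring_nf <;>
            simp [mul_add, add_mul, map_add, map_mul] <;> ring
      rw [Finset.sum_congr rfl hsplit, Finset.sum_add_distrib]
      congr 1
      · -- first sum equals C lam * X^(m-1) * p k expansion
        conv_rhs => rw [Finset.sum_range_succ]
        rw [if_neg (by omega : ¬ (q + 1 ≤ q)), add_zero, Finset.mul_sum]
        apply Finset.sum_congr rfl
        intro n hn
        simp only [Finset.mem_range] at hn
        have hn' : n ≤ q := by omega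
        rw [if_pos hn']
        have hnm : n*m ≤ (m-1)*k := le_trans (Nat.mul_le_mul_right m hn') hAq
        have hE : (m-1)*(k+1) - n*m = (m-1) + ((m-1)*k - n*m) := by
          have : (m-1)*(k+1) = (m-1)*k + (m-1) := by ring
          omega
        have hpow : lam ^ (k+1-n) = lam * lam ^ (k-n) := by
          rw [show k+1-n = (k-n)+1 by omega, pow_succ]
          ring
        rw [hE, hpow, pow_add]
        simp only [map_mul]
        ring
      · -- second sum equals derivative of p k expansion
        conv_rhs => rw [Finset.sum_range_succ']
        rw [if_pos rfl, add_zero, derivative_sum]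
        apply Finset.sum_congr rfl
        intro j hj
        simp only [Finset.mem_range] at hj
        have hj' : j ≤ q := by omega
        have hjm : j*m ≤ (m-1)*k := le_trans (Nat.mul_le_mul_right m hj') hAq
        rw [if_neg (Nat.succ_ne_zero j)]
        have hE : (m-1)*(k+1) - (j+1)*m = (m-1)*k - j*m - 1 := by
          have h1 : (m-1)*(k+1) = (m-1)*k + (m-1) := by ring
          have h2 : (j+1)*m = j*m + m := by ring
          omega
        have hK : k + 1 - (j+1) = k - j := by omega
        rw [derivative_C_mul, derivative_X_pow, hE, hK, Nat.add_sub_cancel]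
        push_cast
        simp only [map_mul]
        ring
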